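/- Let E be a Banach scale on (0,S], let τ ∈ (0,S], and let u : E → E be a 1-bounded τ-morphism with constant C. Let s ∈ (0,τ) satisfy 3C/(τ−s) ≤ 1/2. Then for every x ∈ E_τ the following inequalities hold (all exponential series converging in E_s): (1) ‖(e^{-u}(Id+u) − Id)x‖_s ≤ 36 C² (τ−s)^{-2} ‖x‖_τ; (3) ‖(e^{-u} − Id)x‖_s ≤ 6 C (τ−s)^{-1} ‖x‖_τ; (5) ‖e^{u} x‖_s ≤ 2 ‖x‖_τ; and if moreover u(x) ∈ E_τ, then (2) ‖(e^{-u}(Id+u) − Id)x‖_s ≤ 2 C (τ−s)^{-1} ‖u(x)‖_τ and (4) ‖(e^{-u} − Id)x‖_s ≤ 2 ‖u(x)‖_τ. -/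

import Mathlib

open Filter

/-- A Banach scale on the interval `(0,S]`: a real vector space `E` with a decreasing
family of subspaces `E_s = {x | Mem s x}` for `s ∈ (0,S]`, each equipped with a complete
norm `norm s`, such that the inclusions `E_{s'} ⊆ E_s` (for `s ≤ s'`) have norm at most
`1`. -/
structure BanachScale (E : Type*) [AddCommGroup E] [Module ℝ E] (S : ℝ) where
  /-- membership in `E_s` -/
  Mem : ℝ → E → Prop
  /-- the norm on `E_s` (junk value outside `E_s`) -/
  norm : ℝ → E → ℝ
  mem_zero : ∀ s, Mem s 0
  mem_add : ∀ s x y, Mem s x → Mem s y → Mem s (x + y)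
  mem_smul : ∀ s (c : ℝ) x, Mem s x → Mem s (c • x)
  mem_mono : ∀ s s' x, 0 < s → s ≤ s' → Mem s' x → Mem s x
  norm_nonneg : ∀ s x, 0 ≤ norm s x
  norm_zero : ∀ s, norm s 0 = 0
  norm_eq_zero : ∀ s x, 0 < s → s ≤ S → Mem s x → norm s x = 0 → x = 0
  norm_add : ∀ s x y, norm s (x + y) ≤ norm s x + norm s y
  norm_smul : ∀ s (c : ℝ) x, norm s (c • x) = |c| * norm s x
  norm_mono : ∀ s s' x, 0 < s → s ≤ s' → s' ≤ S → Mem s' x → norm s x ≤ norm s' x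
  complete : ∀ s, 0 < s → s ≤ S → ∀ x : ℕ → E, (∀ n, Mem s (x n)) →
    (∀ ε : ℝ, 0 < ε → ∃ N : ℕ, ∀ m ≥ N, ∀ n ≥ N, norm s (x m - x n) ≤ ε) →
    ∃ y, Mem s y ∧ Tendsto (fun n => norm s (x n - y)) atTop (nhds 0)

namespace BanachScale

variable {E : Type*} [AddCommGroup E] [Module ℝ E] {S : ℝ}

/-- `u` is a `k`-bounded `τ`-morphism with constant `C`:
`u(E_{s+σ}) ⊆ E_s` and `‖u x‖_s ≤ C σ^{-k} ‖x‖_{s+σ}` whenever `0 < s`, `0 < σ`,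
`s + σ ≤ τ`. -/
def IsBounded (sc : BanachScale E S) (τ : ℝ) (k : ℕ) (C : ℝ)
    (u : Module.End ℝ E) : Prop :=
  ∀ s σ : ℝ, 0 < s → 0 < σ → s + σ ≤ τ → ∀ x, sc.Mem (s + σ) x →
    sc.Mem s (u x) ∧ sc.norm s (u x) ≤ C / σ ^ k * sc.norm (s + σ) x

/-- Convergence of a sequence to `y` in the Banach space `E_s`. -/
def ConvergesTo (sc : BanachScale E S) (s : ℝ) (x : ℕ → E) (y : E) : Prop :=
  (∀ n, sc.Mem s (x n)) ∧ sc.Mem s y ∧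
    Tendsto (fun n => sc.norm s (x n - y)) atTop (nhds 0)

/-- Partial sums of the exponential series `Σ_j u^j x / j!`. -/
noncomputable def expPartial (u : Module.End ℝ E) (x : E) (N : ℕ) : E :=
  ∑ j ∈ Finset.range N, ((j.factorial : ℝ))⁻¹ • (u ^ j) x

/-- The sum `e^u x` of the exponential series, when it converges at some level of the
scale (an arbitrary default value otherwise). -/
noncomputable def expMap (sc : BanachScale E S) (u : Module.End ℝ E) (x : E) : E :=
  open scoped Classical in
  if h : ∃ y, ∃ s, 0 < s ∧ s ≤ S ∧ sc.ConvergesTo s (expPartial u x) y then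
    h.choose
  else 0

/-- `N_s(u)`: the infimum of the constants `C` such that `u` is a `1`-bounded
`s`-morphism with constant `C`. -/
noncomputable def Nval (sc : BanachScale E S) (s : ℝ) (u : Module.End ℝ E) : ℝ :=
  sInf {C | 0 ≤ C ∧ ∀ s' σ : ℝ, 0 < s' → 0 < σ → s' + σ ≤ s → ∀ x,
    sc.Mem (s' + σ) x →
      sc.Mem s' (u x) ∧ sc.norm s' (u x) ≤ C / σ * sc.norm (s' + σ) x}

end BanachScale

open BanachScale

section Aux

variable {E : Type*} [AddCommGroup E] [Module ℝ E] {S : ℝ}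

lemma BS.norm_neg (sc : BanachScale E S) (s : ℝ) (z : E) :
    sc.norm s (-z) = sc.norm s z := by
  have h : (-z) = (-1 : ℝ) • z := by simp
  rw [h, sc.norm_smul]; simp

lemma BS.norm_sub_comm (sc : BanachScale E S) (s : ℝ) (a b : E) :
    sc.norm s (a - b) = sc.norm s (b - a) := by
  rw [← BS.norm_neg sc s (a - b)]; congr 1; abel

lemma BS.mem_sum (sc : BanachScale E S) (s : ℝ) (F : Finset ℕ) (f : ℕ → E)
    (h : ∀ j ∈ F, sc.Mem s (f j)) : sc.Mem s (∑ j ∈ F, f j) := by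
  classical
  induction F using Finset.induction_on with
  | empty => simpa using sc.mem_zero s
  | insert _ _ hnot ih =>
    rw [Finset.sum_insert hnot]
    exact sc.mem_add _ _ _ (h _ (Finset.mem_insert_self _ _))
      (ih fun j hj => h j (Finset.mem_insert_of_mem hj))

lemma BS.norm_sum_le (sc : BanachScale E S) (s : ℝ) (F : Finset ℕ) (f : ℕ → E) :
    sc.norm s (∑ j ∈ F, f j) ≤ ∑ j ∈ F, sc.norm s (f j) := by
  classical
  induction F using Finset.induction_on with
  | empty => simp [sc.norm_zero]
  | insert _ _ hnot ih =>
    rw [Finset.sum_insert hnot, Finset.sum_insert hnot]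
    exact le_trans (sc.norm_add _ _ _) (by linarith)

lemma BS.geom_le (q : ℝ) (h0 : 0 ≤ q) (h1 : q < 1) (n : ℕ) :
    ∑ j ∈ Finset.range n, q ^ j ≤ 1 / (1 - q) := by
  rw [geom_sum_eq (by linarith : q ≠ 1)]
  have h2 : (q ^ n - 1) / (q - 1) = (1 - q ^ n) / (1 - q) := by
    rw [div_eq_div_iff (by linarith) (by linarith)]; ring
  rw [h2]
  gcongr
  · linarith [pow_nonneg h0 n]

lemma BS.pow_eventually_le (q K ε : ℝ) (hq0 : 0 ≤ q) (hq1 : q < 1) (hK : 0 ≤ K)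
    (hε : 0 < ε) : ∃ N₀ : ℕ, ∀ N ≥ N₀, K * q ^ N ≤ ε := by
  obtain ⟨n, hn⟩ := exists_pow_lt_of_lt_one (show (0:ℝ) < ε / (K + 1) by positivity) hq1
  refine ⟨n, fun N hN => ?_⟩
  have h1 : q ^ N ≤ q ^ n := pow_le_pow_of_le_one hq0 hq1.le hN
  have h2 : (0:ℝ) ≤ q ^ N := pow_nonneg hq0 N
  have h3 : K * q ^ N ≤ (K + 1) * q ^ n := by nlinarith
  have h4 : (K + 1) * (ε / (K + 1)) = ε := by field_simp
  nlinarith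

lemma BS.conv_of_geom (sc : BanachScale E S) {s : ℝ} (hs0 : 0 < s) (hsS : s ≤ S)
    (v : ℕ → E) (K q : ℝ) (hq0 : 0 ≤ q) (hq1 : q < 1)
    (hmem : ∀ j, sc.Mem s (v j)) (hb : ∀ j, sc.norm s (v j) ≤ K * q ^ j) :
    ∃ y, sc.ConvergesTo s (fun N => ∑ j ∈ Finset.range N, v j) y := by
  have hK : 0 ≤ K := by
    have := hb 0; have := sc.norm_nonneg s (v 0); simpa using le_trans ‹_› (hb 0)
  have hmemP : ∀ N, sc.Mem s (∑ j ∈ Finset.range N, v j) :=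
    fun N => BS.mem_sum sc s _ _ (fun j _ => hmem j)
  have hIco : ∀ n m : ℕ, n ≤ m →
      sc.norm s (∑ j ∈ Finset.range m, v j - ∑ j ∈ Finset.range n, v j)
        ≤ K * q ^ n * (1 / (1 - q)) := by
    intro n m hnm
    rw [← Finset.sum_Ico_eq_sub _ hnm]
    refine le_trans (BS.norm_sum_le sc s _ _) ?_
    have h1 : ∑ j ∈ Finset.Ico n m, sc.norm s (v j) ≤ ∑ j ∈ Finset.Ico n m, K * q ^ j :=
      Finset.sum_le_sum fun j _ => hb j
    refine le_trans h1 ?_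
    rw [Finset.sum_Ico_eq_sum_range]
    have h2 : ∀ j : ℕ, K * q ^ (n + j) = K * q ^ n * q ^ j := by
      intro j; rw [pow_add]; ring
    rw [Finset.sum_congr rfl (fun j _ => h2 j), ← Finset.mul_sum]
    have h3 := BS.geom_le q hq0 hq1 (m - n)
    have h4 : 0 ≤ K * q ^ n := by positivity
    nlinarith
  have hcauchy : ∀ ε : ℝ, 0 < ε → ∃ N : ℕ, ∀ m ≥ N, ∀ n ≥ N,
      sc.norm s (∑ j ∈ Finset.range m, v j - ∑ j ∈ Finset.range n, v j) ≤ ε := by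
    intro ε hε
    obtain ⟨N₀, hN₀⟩ := BS.pow_eventually_le q (K * (1 / (1 - q))) ε hq0 hq1
      (mul_nonneg hK (div_nonneg zero_le_one (by linarith))) hε
    refine ⟨N₀, fun m hm n hn => ?_⟩
    rcases le_total n m with h | h
    · refine le_trans (hIco n m h) ?_
      have := hN₀ n hn; nlinarith [pow_nonneg hq0 n]
    · rw [BS.norm_sub_comm]
      refine le_trans (hIco m n h) ?_
      have := hN₀ m hm; nlinarith [pow_nonneg hq0 m]
  obtain ⟨y, hy1, hy2⟩ := sc.complete s hs0 hsS _ hmemP hcauchy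
  exact ⟨y, hmemP, hy1, hy2⟩

lemma BS.norm_lim_le (sc : BanachScale E S) {s : ℝ} (P : ℕ → E) (y z : E) (B : ℝ)
    (hP : sc.ConvergesTo s P y)
    (h : ∀ ε : ℝ, 0 < ε → ∃ N₀ : ℕ, ∀ N ≥ N₀, sc.norm s (P N - z) ≤ B + ε) :
    sc.norm s (y - z) ≤ B := by
  refine le_of_forall_pos_le_add fun ε hε => ?_
  obtain ⟨N₀, hN₀⟩ := h (ε / 2) (by linarith)
  have htd := hP.2.2
  rw [Metric.tendsto_atTop] at htd
  obtain ⟨N₁, hN₁⟩ := htd (ε / 2) (by linarith)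
  set N := max N₀ N₁
  have h1 : sc.norm s (P N - z) ≤ B + ε / 2 := hN₀ N (le_max_left _ _)
  have h2 : sc.norm s (P N - y) ≤ ε / 2 := by
    have := hN₁ N (le_max_right _ _)
    rw [Real.dist_eq, sub_zero] at this
    have hnn := sc.norm_nonneg s (P N - y)
    rw [abs_of_nonneg hnn] at this; linarith
  have h3 : sc.norm s (y - z) ≤ sc.norm s (y - P N) + sc.norm s (P N - z) := by
    have := sc.norm_add s (y - P N) (P N - z)
    simpa [sub_add_sub_cancel] using this
  rw [BS.norm_sub_comm sc s y (P N)] at h3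
  linarith

end Aux

section RealAux

lemma BS.three_mul_pow_le : ∀ j : ℕ, 1 ≤ j → 3 * (j:ℝ)^j ≤ 3^j * (j.factorial : ℝ) := by
  intro j hj
  induction j, hj using Nat.le_induction with
  | base => norm_num
  | succ j hj ih =>
    have hj0 : (0:ℝ) < j := by exact_mod_cast hj
    have hjj : (0:ℝ) ≤ (j:ℝ)^j := by positivity
    have hexp : ((j:ℝ)+1)^j ≤ 3 * (j:ℝ)^j := by
      have h1 : (1 + 1/(j:ℝ)) ≤ Real.exp (1/(j:ℝ)) := by
        have := Real.add_one_le_exp (1/(j:ℝ)); linarith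
      have h2 : (1 + 1/(j:ℝ))^j ≤ Real.exp (1/(j:ℝ))^j :=
        pow_le_pow_left₀ (by positivity) h1 j
      have h3 : Real.exp (1/(j:ℝ))^j = Real.exp 1 := by
        rw [← Real.exp_nat_mul]; congr 1; field_simp
      have h4 : Real.exp 1 ≤ 3 := by
        have := Real.exp_one_lt_d9; linarith
      have h5 : ((j:ℝ)+1)^j = (j:ℝ)^j * (1+1/(j:ℝ))^j := by
        rw [← mul_pow]; congr 1; field_simp
      rw [h5]
      calc (j:ℝ)^j * (1+1/(j:ℝ))^j ≤ (j:ℝ)^j * 3 := by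
            refine mul_le_mul_of_nonneg_left ?_ hjj
            exact le_trans h2 (by rw [h3]; exact h4)
        _ = 3 * (j:ℝ)^j := by ring
    have hfac : ((j+1).factorial : ℝ) = ((j:ℝ)+1) * (j.factorial : ℝ) := by
      rw [Nat.factorial_succ]; push_cast; ring
    have hcast : ((j:ℕ)+1 : ℕ) = j + 1 := rfl
    push_cast
    have goal1 : 3 * ((j:ℝ)+1)^(j+1) ≤ 3^(j+1) * (((j:ℝ)+1) * (j.factorial : ℝ)) := by
      have e1 : ((j:ℝ)+1)^(j+1) = ((j:ℝ)+1) * ((j:ℝ)+1)^j := by rw [pow_succ]; ring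
      have e2 : (3:ℝ)^(j+1) = 3 * 3^j := by rw [pow_succ]; ring
      rw [e1, e2]
      have h6 : 3 * (((j:ℝ)+1) * ((j:ℝ)+1)^j) ≤ 3 * (((j:ℝ)+1) * (3 * (j:ℝ)^j)) := by
        have : (0:ℝ) ≤ (j:ℝ)+1 := by positivity
        nlinarith [hexp]
      refine le_trans h6 ?_
      have h7 : (0:ℝ) ≤ (j:ℝ)+1 := by positivity
      have h8 := ih
      nlinarith
    calc 3 * ((j:ℝ)+1)^(j+1) ≤ 3^(j+1) * (((j:ℝ)+1) * (j.factorial : ℝ)) := goal1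
      _ = 3^(j+1) * ((j+1).factorial : ℝ) := by rw [hfac]

/-- `(k+1)^{k+1} ≤ 3^k (k+1)!` over the reals. -/
lemma BS.pow_succ_le (k : ℕ) : ((k:ℝ)+1)^(k+1) ≤ 3^k * ((k+1).factorial : ℝ) := by
  have h := BS.three_mul_pow_le (k+1) (Nat.le_add_left 1 k)
  have hc : ((k+1 : ℕ) : ℝ) = (k:ℝ)+1 := by push_cast; ring
  rw [hc] at h
  have h3 : (3:ℝ)^(k+1) = 3 * 3^k := by rw [pow_succ]; ring
  rw [h3] at h
  linarith

lemma BS.sum_half_le (N : ℕ) : ∑ j ∈ Finset.range N, ((1:ℝ)/2)^j ≤ 2 := by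
  have := BS.geom_le (1/2) (by norm_num) (by norm_num) N
  linarith [this]

lemma BS.sum_j_half_eq : ∀ N : ℕ,
    ∑ j ∈ Finset.range N, (j:ℝ) * (1/2)^j + 2*((N:ℝ)+1)*(1/2)^N = 2 := by
  intro N
  induction N with
  | zero => simp
  | succ N ih =>
    rw [Finset.sum_range_succ]
    have e : ((1:ℝ)/2)^(N+1) = (1/2)^N * (1/2) := by rw [pow_succ]
    push_cast
    rw [e]
    push_cast at ih
    linarith

lemma BS.sum_j_half_le (N : ℕ) : ∑ j ∈ Finset.range N, (j:ℝ) * (1/2)^j ≤ 2 := by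
  have := BS.sum_j_half_eq N
  have h2 : (0:ℝ) ≤ 2*((N:ℝ)+1)*(1/2)^N := by positivity
  linarith

lemma BS.j_add_two_le : ∀ j : ℕ, ((j:ℝ)+2)*(1/2)^j ≤ 2*(3/4)^j := by
  intro j
  induction j with
  | zero => norm_num
  | succ j ih =>
    have e1 : ((1:ℝ)/2)^(j+1) = (1/2)^j * (1/2) := by rw [pow_succ]
    have e2 : ((3:ℝ)/4)^(j+1) = (3/4)^j * (3/4) := by rw [pow_succ]
    have h1 : (0:ℝ) ≤ (1/2)^j := by positivity
    push_cast
    rw [e1, e2]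
    push_cast at ih
    nlinarith

end RealAux

section PowBound

variable {E : Type*} [AddCommGroup E] [Module ℝ E] {S : ℝ}

lemma BS.pow_bound (sc : BanachScale E S) {τ C : ℝ} {u : Module.End ℝ E}
    (hτS : τ ≤ S) (hC : 0 ≤ C) (hu : sc.IsBounded τ 1 C u) :
    ∀ (j : ℕ) (s' σ' : ℝ), 0 < s' → 0 < σ' → s' + σ' ≤ τ → ∀ x, sc.Mem (s'+σ') x →
      sc.Mem s' ((u^j) x) ∧
        sc.norm s' ((u^j) x) ≤ (C * j / σ')^j * sc.norm (s'+σ') x := by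
  intro j
  induction j with
  | zero =>
    intro s' σ' h1 h2 h3 x hx
    have hle : s' ≤ s' + σ' := by linarith
    constructor
    · simpa using sc.mem_mono s' (s'+σ') x h1 hle hx
    · simpa using sc.norm_mono s' (s'+σ') x h1 hle (le_trans h3 hτS) hx
  | succ j ih =>
    intro s' σ' h1 h2 h3 x hx
    have happ : (u^(j+1)) x = (u^j) (u x) := by rw [pow_succ]; rfl
    rcases Nat.eq_zero_or_pos j with hj | hj
    · subst hj
      obtain ⟨hm, hn⟩ := hu s' σ' h1 h2 h3 x hx
      have e : (C * ((0:ℕ)+1 : ℕ) / σ')^(0+1) = C / σ' ^ 1 := by push_cast; ring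
      rw [happ]
      simp only [pow_zero, Module.End.one_apply]
      refine ⟨hm, ?_⟩
      refine le_trans hn ?_
      rw [show (C * ((0+1 : ℕ):ℝ) / σ')^(0+1) = C / σ' ^ 1 by push_cast; ring]
    · have hjR : (0:ℝ) < j := by exact_mod_cast hj
      set σ1 := σ' / (j+1) with hσ1def
      have hσ1 : 0 < σ1 := by positivity
      have hw : 0 < (j:ℝ) * σ1 := by positivity
      have hlev : s' + (j:ℝ) * σ1 + σ1 = s' + σ' := by
        rw [hσ1def]; field_simp; ring
      have hlev2 : s' + (j:ℝ)*σ1 ≤ τ := by nlinarith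
      have hmemx : sc.Mem (s' + (j:ℝ)*σ1 + σ1) x := by rw [hlev]; exact hx
      obtain ⟨hm1, hn1⟩ := hu (s' + (j:ℝ)*σ1) σ1 (by positivity) hσ1
        (by rw [hlev]; exact h3) x hmemx
      rw [hlev] at hn1
      obtain ⟨hm2, hn2⟩ := ih s' ((j:ℝ)*σ1) h1 hw (by linarith [hlev2]) (u x) hm1
      rw [happ]
      refine ⟨hm2, ?_⟩
      have hA : C * (j:ℝ) / ((j:ℝ)*σ1) = C * ((j:ℝ)+1) / σ' := by
        rw [hσ1def]; field_simp
      have hB : C / σ1 ^ 1 = C * ((j:ℝ)+1) / σ' := by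
        rw [hσ1def]; field_simp
      rw [hA] at hn2
      rw [hB] at hn1
      have hApos : (0:ℝ) ≤ C * ((j:ℝ)+1) / σ' := by positivity
      have step : sc.norm s' ((u ^ j) (u x))
          ≤ (C * ((j:ℝ)+1) / σ')^j * (C * ((j:ℝ)+1) / σ' * sc.norm (s'+σ') x) := by
        refine le_trans hn2 ?_
        exact mul_le_mul_of_nonneg_left hn1 (by positivity)
      refine le_trans step (le_of_eq ?_)
      rw [show ((j+1 : ℕ):ℝ) = (j:ℝ)+1 by push_cast; ring, pow_succ]
      ring

end PowBound

section Identity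

variable {E : Type*} [AddCommGroup E] [Module ℝ E]

lemma BS.neg_pow_apply (u : Module.End ℝ E) (n : ℕ) (z : E) :
    ((-u)^n) z = ((-1:ℝ)^n) • ((u^n) z) := by
  have h : (-u) = (-1:ℝ) • u := by simp
  rw [h, smul_pow]
  simp

lemma BS.exp_partial_identity (u : Module.End ℝ E) (x : E) : ∀ N : ℕ,
    expPartial (-u) (x + u x) (N+1)
      = x + (∑ j ∈ Finset.range N,
          (((-1:ℝ))^j * (j:ℝ) / (((j+1).factorial : ℕ) : ℝ)) • ((u^(j+1)) x))
        + (((-1:ℝ))^N / ((N.factorial : ℕ) : ℝ)) • ((u^(N+1)) x) := by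
  intro N
  induction N with
  | zero =>
    simp [expPartial, Finset.sum_range_one]
  | succ N ih =>
    have hsum : expPartial (-u) (x + u x) (N+1+1)
        = expPartial (-u) (x + u x) (N+1)
          + ((((N+1).factorial : ℕ):ℝ))⁻¹ • (((-u)^(N+1)) (x + u x)) := by
      simp [expPartial, Finset.sum_range_succ]
    have happ : ((-u)^(N+1)) (x + u x)
        = ((-1:ℝ)^(N+1)) • ((u^(N+1)) x + (u^(N+2)) x) := by
      have h22 : (u^(N+2)) x = (u^(N+1)) (u x) := by
        rw [show N+2 = (N+1)+1 from rfl, pow_succ]; rfl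
      rw [BS.neg_pow_apply, map_add, h22]
    rw [hsum, ih, happ, Finset.sum_range_succ]
    have hf1 : ((N.factorial : ℕ):ℝ) ≠ 0 :=
      Nat.cast_ne_zero.mpr (Nat.factorial_ne_zero N)
    have hf2 : (((N+1).factorial : ℕ):ℝ) ≠ 0 :=
      Nat.cast_ne_zero.mpr (Nat.factorial_ne_zero (N+1))
    have hfs : (((N+1).factorial : ℕ):ℝ) = ((N:ℝ)+1) * ((N.factorial : ℕ):ℝ) := by
      rw [Nat.factorial_succ]; push_cast; ring
    match_scalars <;> (try (field_simp [hfs, pow_succ]; try ring))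
    rw [add_comm 1 N, hfs]; ring
end Identity

set_option maxHeartbeats 2000000 in
/-- Estimates for the exponential of a `1`-bounded `τ`-morphism `u` with constant `C`:
for `s < τ` with `3C/(τ−s) ≤ 1/2` and `x ∈ E_τ`, the series for `e^{-u}x`,
`e^{-u}(x + ux)` and `e^{u}x` converge in `E_s` and satisfy
(1) `‖e^{-u}(Id+u)x − x‖_s ≤ 36C²(τ−s)^{-2}‖x‖_τ`,
(3) `‖e^{-u}x − x‖_s ≤ 6C(τ−s)^{-1}‖x‖_τ`,
(5) `‖e^{u}x‖_s ≤ 2‖x‖_τ`,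
and, if moreover `u x ∈ E_τ`,
(2) `‖e^{-u}(Id+u)x − x‖_s ≤ 2C(τ−s)^{-1}‖u x‖_τ` and
(4) `‖e^{-u}x − x‖_s ≤ 2‖u x‖_τ`. -/
theorem exp_remainder_estimates {E : Type*} [AddCommGroup E] [Module ℝ E]
    {S : ℝ} (hS : 0 < S)
    (sc : BanachScale E S) (τ : ℝ) (hτ0 : 0 < τ) (hτS : τ ≤ S)
    (u : Module.End ℝ E) (C : ℝ) (hC : 0 ≤ C)
    (hu : sc.IsBounded τ 1 C u)
    (s : ℝ) (hs0 : 0 < s) (hsτ : s < τ)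
    (hsmall : 3 * C / (τ - s) ≤ 1 / 2) :
    ∀ x, sc.Mem τ x →
      ∃ yem yemu yep : E,
        sc.ConvergesTo s (expPartial (-u) x) yem ∧
        sc.ConvergesTo s (expPartial (-u) (x + u x)) yemu ∧
        sc.ConvergesTo s (expPartial u x) yep ∧
        sc.norm s (yemu - x) ≤ 36 * C ^ 2 / (τ - s) ^ 2 * sc.norm τ x ∧
        sc.norm s (yem - x) ≤ 6 * C / (τ - s) * sc.norm τ x ∧
        sc.norm s yep ≤ 2 * sc.norm τ x ∧
        (sc.Mem τ (u x) →
          sc.norm s (yemu - x) ≤ 2 * C / (τ - s) * sc.norm τ (u x) ∧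
          sc.norm s (yem - x) ≤ 2 * sc.norm τ (u x)) := by
  intro x hx
  have hσ : 0 < τ - s := by linarith
  set σ : ℝ := τ - s with hσdef
  have hsτ' : s + σ = τ := by rw [hσdef]; ring
  have hsS : s ≤ S := le_trans hsτ.le hτS
  set t : ℝ := C / σ with htdef
  have ht0 : 0 ≤ t := by positivity
  have ht : 3 * t ≤ 1/2 := by
    have h : 3 * (C / σ) = 3 * C / σ := by ring
    rw [htdef, h]; exact hsmall
  have ht6 : t ≤ 1/6 := by linarith
  set M : ℝ := sc.norm τ x with hMdef
  have hM0 : 0 ≤ M := sc.norm_nonneg τ x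
  -- iterated power bounds
  have hpow : ∀ (z : E), sc.Mem τ z → ∀ j : ℕ, sc.Mem s ((u^j) z) ∧
      sc.norm s ((u^j) z) ≤ (C * j / σ)^j * sc.norm τ z := by
    intro z hz j
    have h := BS.pow_bound sc hτS hC hu j s σ hs0 hσ (le_of_eq hsτ')
      z (by rw [hsτ']; exact hz)
    rwa [hsτ'] at h
  have hmem_pow : ∀ j : ℕ, sc.Mem s ((u^j) x) := fun j => (hpow x hx j).1
  have hnorm_pow : ∀ j : ℕ, sc.norm s ((u^j) x) ≤ (C * j / σ)^j * M :=
    fun j => (hpow x hx j).2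
  have hCt : ∀ r : ℝ, C * r / σ = t * r := fun r => by rw [htdef]; ring
  have hfacpos : ∀ m : ℕ, (0:ℝ) < ((m.factorial : ℕ) : ℝ) :=
    fun m => by exact_mod_cast m.factorial_pos
  have h3t : ∀ k : ℕ, (3*t)^k ≤ ((1:ℝ)/2)^k :=
    fun k => pow_le_pow_left₀ (by positivity) ht k
  -- key per-term bound
  have hterm : ∀ k : ℕ, ((((k+1).factorial : ℕ):ℝ))⁻¹ * (C*((k:ℝ)+1)/σ)^(k+1)
      ≤ t * (1/2)^k := by
    intro k
    rw [hCt ((k:ℝ)+1), mul_pow]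
    have h2 := BS.pow_succ_le k
    have hfp := hfacpos (k+1)
    have h3 : ((((k+1).factorial : ℕ):ℝ))⁻¹ * (t^(k+1) * ((k:ℝ)+1)^(k+1))
        ≤ ((((k+1).factorial : ℕ):ℝ))⁻¹ * (t^(k+1) * (3^k * (((k+1).factorial : ℕ):ℝ))) := by
      gcongr
    refine le_trans h3 ?_
    have h4 : ((((k+1).factorial : ℕ):ℝ))⁻¹ * (t^(k+1) * (3^k * (((k+1).factorial : ℕ):ℝ)))
        = t * (3*t)^k := by
      field_simp [mul_pow]; ring
    rw [h4]
    exact mul_le_mul_of_nonneg_left (h3t k) ht0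
  -- the three sequences
  set vm : ℕ → E := fun j => (((j.factorial : ℕ):ℝ))⁻¹ • ((-u)^j) x with hvmdef
  set vp : ℕ → E := fun j => (((j.factorial : ℕ):ℝ))⁻¹ • ((u)^j) x with hvpdef
  set vq : ℕ → E := fun j => (((j.factorial : ℕ):ℝ))⁻¹ • ((-u)^j) (x + u x) with hvqdef
  have h22 : ∀ j : ℕ, ((u)^(j+1)) x = ((u)^j) (u x) := fun j => by rw [pow_succ]; rfl
  have habs1 : ∀ j : ℕ, |((-1:ℝ))^j| = 1 := fun j => by rw [abs_pow]; simp
  have hvm_norm : ∀ j, sc.norm s (vm j)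
      = (((j.factorial : ℕ):ℝ))⁻¹ * sc.norm s ((u^j) x) := by
    intro j
    show sc.norm s ((((j.factorial : ℕ):ℝ))⁻¹ • ((-u)^j) x) = _
    rw [BS.neg_pow_apply, sc.norm_smul, sc.norm_smul, habs1, one_mul,
      abs_of_nonneg (by positivity : (0:ℝ) ≤ (((j.factorial : ℕ):ℝ))⁻¹)]
  have hvp_norm : ∀ j, sc.norm s (vp j)
      = (((j.factorial : ℕ):ℝ))⁻¹ * sc.norm s ((u^j) x) := by
    intro j
    show sc.norm s ((((j.factorial : ℕ):ℝ))⁻¹ • ((u)^j) x) = _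
    rw [sc.norm_smul,
      abs_of_nonneg (by positivity : (0:ℝ) ≤ (((j.factorial : ℕ):ℝ))⁻¹)]
  have hnsx : sc.norm s x ≤ M := sc.norm_mono s τ x hs0 hsτ.le hτS hx
  -- cast helper
  have hcast : ∀ k : ℕ, ((k+1 : ℕ):ℝ) = (k:ℝ)+1 := fun k => by push_cast; ring
  have hup1 : ∀ k : ℕ, sc.norm s ((u^(k+1)) x) ≤ (C*((k:ℝ)+1)/σ)^(k+1) * M := by
    intro k
    have := hnorm_pow (k+1)
    rwa [hcast k] at this
  -- geometric envelope for the series on x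
  have hvmb : ∀ k : ℕ, sc.norm s (vm (k+1)) ≤ (t*M) * (1/2)^k := by
    intro k
    rw [hvm_norm]
    calc ((((k+1).factorial : ℕ):ℝ))⁻¹ * sc.norm s ((u^(k+1)) x)
        ≤ ((((k+1).factorial : ℕ):ℝ))⁻¹ * ((C*((k:ℝ)+1)/σ)^(k+1) * M) := by
          exact mul_le_mul_of_nonneg_left (hup1 k) (by positivity)
      _ = (((((k+1).factorial : ℕ):ℝ))⁻¹ * (C*((k:ℝ)+1)/σ)^(k+1)) * M := by ring
      _ ≤ (t * (1/2)^k) * M :=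
          mul_le_mul_of_nonneg_right (hterm k) hM0
      _ = (t*M) * (1/2)^k := by ring
  have hhalf_pos : ∀ k : ℕ, (0:ℝ) ≤ (1/2:ℝ)^k := fun k => by positivity
  have henv : ∀ j, (((j.factorial : ℕ):ℝ))⁻¹ * sc.norm s ((u^j) x) ≤ M * (1/2)^j := by
    intro j
    cases j with
    | zero => simpa using hnsx
    | succ k =>
      have h1 : sc.norm s (vm (k+1)) ≤ (t*M) * (1/2)^k := hvmb k
      rw [hvm_norm] at h1
      refine le_trans h1 ?_
      rw [pow_succ]
      nlinarith [mul_nonneg (mul_nonneg (show (0:ℝ) ≤ 1/2 - t by linarith) (hhalf_pos k)) hM0]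
  have hvm_geom : ∀ j, sc.norm s (vm j) ≤ M * (1/2)^j := fun j => by
    rw [hvm_norm]; exact henv j
  have hvp_geom : ∀ j, sc.norm s (vp j) ≤ M * (1/2)^j := fun j => by
    rw [hvp_norm]; exact henv j
  have hvm_mem : ∀ j, sc.Mem s (vm j) := by
    intro j
    show sc.Mem s ((((j.factorial : ℕ):ℝ))⁻¹ • ((-u)^j) x)
    rw [BS.neg_pow_apply]
    exact sc.mem_smul _ _ _ (sc.mem_smul _ _ _ (hmem_pow j))
  have hvp_mem : ∀ j, sc.Mem s (vp j) := by
    intro j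
    exact sc.mem_smul _ _ _ (hmem_pow j)
  -- bounds for the series on x + u x
  have hvq_norm : ∀ j, sc.norm s (vq j)
      ≤ (((j.factorial : ℕ):ℝ))⁻¹ * (sc.norm s ((u^j) x) + sc.norm s ((u^(j+1)) x)) := by
    intro j
    show sc.norm s ((((j.factorial : ℕ):ℝ))⁻¹ • ((-u)^j) (x + u x)) ≤ _
    rw [BS.neg_pow_apply, map_add, ← h22 j, sc.norm_smul, sc.norm_smul, habs1, one_mul,
      abs_of_nonneg (by positivity : (0:ℝ) ≤ (((j.factorial : ℕ):ℝ))⁻¹)]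
    exact mul_le_mul_of_nonneg_left (sc.norm_add s _ _) (by positivity)
  have hvq_mem : ∀ j, sc.Mem s (vq j) := by
    intro j
    show sc.Mem s ((((j.factorial : ℕ):ℝ))⁻¹ • ((-u)^j) (x + u x))
    rw [BS.neg_pow_apply, map_add, ← h22 j]
    exact sc.mem_smul _ _ _ (sc.mem_smul _ _ _
      (sc.mem_add _ _ _ (hmem_pow j) (hmem_pow (j+1))))
  have hvq_geom : ∀ j, sc.norm s (vq j) ≤ (2*M) * (3/4)^j := by
    intro j
    refine le_trans (hvq_norm j) ?_
    have hpiece1 : (((j.factorial : ℕ):ℝ))⁻¹ * sc.norm s ((u^j) x) ≤ M * (1/2)^j := henv j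
    have hpiece2 : (((j.factorial : ℕ):ℝ))⁻¹ * sc.norm s ((u^(j+1)) x)
        ≤ ((j:ℝ)+1) * ((t*M) * (1/2)^j) := by
      have e1 : (((j.factorial : ℕ):ℝ))⁻¹ = ((j:ℝ)+1) * ((((j+1).factorial : ℕ):ℝ))⁻¹ := by
        rw [Nat.factorial_succ]
        have := hfacpos j
        push_cast
        field_simp
      rw [e1, mul_assoc]
      refine mul_le_mul_of_nonneg_left ?_ (by positivity)
      have h1 : sc.norm s (vm (j+1)) ≤ (t*M) * (1/2)^j := hvmb j
      rw [hvm_norm] at h1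
      exact h1
    have hjt : ((j:ℝ)+1) * t ≤ ((j:ℝ)+1) := by
      nlinarith [Nat.cast_nonneg (α := ℝ) j]
    have h2 : M * (1/2)^j + ((j:ℝ)+1) * ((t*M) * (1/2)^j) ≤ (((j:ℝ))+2) * (1/2)^j * M := by
      have h3 : ((j:ℝ)+1) * ((t*M) * (1/2)^j) = (((j:ℝ)+1)*t) * (M * (1/2)^j) := by ring
      rw [h3]
      have h4 : (((j:ℝ)+1)*t) * (M * (1/2)^j) ≤ ((j:ℝ)+1) * (M * (1/2)^j) :=
        mul_le_mul_of_nonneg_right hjt (by positivity)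
      nlinarith [h4]
    refine le_trans (by linarith [hpiece1, hpiece2] : _ ≤ (((j:ℝ))+2) * (1/2)^j * M) ?_
    have h5 := BS.j_add_two_le j
    calc (((j:ℝ))+2) * (1/2)^j * M ≤ (2*(3/4)^j) * M :=
          mul_le_mul_of_nonneg_right h5 hM0
      _ = (2*M) * (3/4)^j := by ring
  -- convergence of the three series
  obtain ⟨yem, hyem⟩ := BS.conv_of_geom sc hs0 hsS vm M (1/2)
    (by norm_num) (by norm_num) hvm_mem hvm_geom
  obtain ⟨yep, hyep⟩ := BS.conv_of_geom sc hs0 hsS vp M (1/2)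
    (by norm_num) (by norm_num) hvp_mem hvp_geom
  obtain ⟨yemu, hyemu⟩ := BS.conv_of_geom sc hs0 hsS vq (2*M) (3/4)
    (by norm_num) (by norm_num) hvq_mem hvq_geom
  have hPm : expPartial (-u) x = fun N => ∑ j ∈ Finset.range N, vm j := rfl
  have hPp : expPartial u x = fun N => ∑ j ∈ Finset.range N, vp j := rfl
  have hPq : expPartial (-u) (x + u x) = fun N => ∑ j ∈ Finset.range N, vq j := rfl
  refine ⟨yem, yemu, yep, by rw [hPm]; exact hyem, by rw [hPq]; exact hyemu,
    by rw [hPp]; exact hyep, ?_, ?_, ?_, ?_⟩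
  · -- estimate (1)
    have he1 : 36 * C^2 / σ^2 = 36 * t^2 := by rw [htdef, div_pow]; ring
    rw [he1]
    have hE2 : ∀ j : ℕ, (j:ℝ) / (((j+1).factorial : ℕ):ℝ) * (C*((j:ℝ)+1)/σ)^(j+1)
        ≤ 6 * t^2 * ((j:ℝ) * (1/2)^j) := by
      intro j
      cases j with
      | zero => simp
      | succ k =>
        push_cast
        have hr : C*(((k:ℝ)+1)+1)/σ = t*((k:ℝ)+2) := by
          rw [show ((k:ℝ)+1)+1 = (k:ℝ)+2 by ring]; exact hCt _
        rw [hr, mul_pow]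
        have hps := BS.pow_succ_le (k+1)
        have hps' : ((k:ℝ)+2)^(k+2) ≤ 3^(k+1) * (((k+2).factorial : ℕ):ℝ) := by
          have hc : ((k+1:ℕ):ℝ)+1 = (k:ℝ)+2 := by push_cast; ring
          rw [hc] at hps
          exact hps
        have hF := hfacpos (k+2)
        have step1 : ((k:ℝ)+1) / (((k+2).factorial : ℕ):ℝ) * (t^(k+2) * ((k:ℝ)+2)^(k+2))
            ≤ ((k:ℝ)+1) / (((k+2).factorial : ℕ):ℝ)
              * (t^(k+2) * (3^(k+1) * (((k+2).factorial : ℕ):ℝ))) := by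
          gcongr
        refine le_trans step1 ?_
        have step2 : ((k:ℝ)+1) / (((k+2).factorial : ℕ):ℝ)
              * (t^(k+2) * (3^(k+1) * (((k+2).factorial : ℕ):ℝ)))
            = (((k:ℝ)+1) * (3*t^2)) * (3*t)^k := by
          field_simp [mul_pow]
          ring
        rw [step2]
        have step3 : (((k:ℝ)+1) * (3*t^2)) * (3*t)^k
            ≤ (((k:ℝ)+1) * (3*t^2)) * (1/2)^k :=
          mul_le_mul_of_nonneg_left (h3t k) (by positivity)
        refine le_trans step3 (le_of_eq ?_)
        rw [pow_succ]
        ring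
    refine BS.norm_lim_le sc _ yemu x (36*t^2*M) hyemu ?_
    intro ε hε
    obtain ⟨N₀, hN₀⟩ := BS.pow_eventually_le (3/4) (2*(t*M)) ε (by norm_num)
      (by norm_num) (by positivity) hε
    refine ⟨N₀+1, fun N hN => ?_⟩
    obtain ⟨N', rfl⟩ : ∃ N', N = N' + 1 := ⟨N - 1, by omega⟩
    have hN' : N₀ ≤ N' := by omega
    show sc.norm s ((∑ j ∈ Finset.range (N'+1), vq j) - x) ≤ 36*t^2*M + ε
    have hPeq : (∑ j ∈ Finset.range (N'+1), vq j)
        = expPartial (-u) (x + u x) (N'+1) := rfl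
    rw [hPeq, BS.exp_partial_identity u x N']
    have hsimp : x + (∑ j ∈ Finset.range N',
          (((-1:ℝ))^j * (j:ℝ) / (((j+1).factorial : ℕ):ℝ)) • ((u^(j+1)) x))
          + (((-1:ℝ))^N' / ((N'.factorial : ℕ):ℝ)) • ((u^(N'+1)) x) - x
        = (∑ j ∈ Finset.range N',
          (((-1:ℝ))^j * (j:ℝ) / (((j+1).factorial : ℕ):ℝ)) • ((u^(j+1)) x))
          + (((-1:ℝ))^N' / ((N'.factorial : ℕ):ℝ)) • ((u^(N'+1)) x) := by abel
    rw [hsimp]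
    refine le_trans (sc.norm_add s _ _) ?_
    -- bound on each term of the main sum
    have hterm1 : ∀ j : ℕ, sc.norm s
          ((((-1:ℝ))^j * (j:ℝ) / (((j+1).factorial : ℕ):ℝ)) • ((u^(j+1)) x))
        ≤ (6*(t^2*M)) * ((j:ℝ) * (1/2)^j) := by
      intro j
      rw [sc.norm_smul]
      have habs : |((-1:ℝ))^j * (j:ℝ) / (((j+1).factorial : ℕ):ℝ)|
          = (j:ℝ) / (((j+1).factorial : ℕ):ℝ) := by
        rw [abs_div, abs_mul, habs1, one_mul, abs_of_nonneg (Nat.cast_nonneg j),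
          abs_of_nonneg (le_of_lt (hfacpos (j+1)))]
      rw [habs]
      calc (j:ℝ) / (((j+1).factorial : ℕ):ℝ) * sc.norm s ((u^(j+1)) x)
          ≤ (j:ℝ) / (((j+1).factorial : ℕ):ℝ) * ((C*((j:ℝ)+1)/σ)^(j+1) * M) :=
            mul_le_mul_of_nonneg_left (hup1 j) (by positivity)
        _ = ((j:ℝ) / (((j+1).factorial : ℕ):ℝ) * (C*((j:ℝ)+1)/σ)^(j+1)) * M := by
            ring
        _ ≤ (6 * t^2 * ((j:ℝ) * (1/2)^j)) * M :=
            mul_le_mul_of_nonneg_right (hE2 j) hM0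
        _ = (6*(t^2*M)) * ((j:ℝ) * (1/2)^j) := by ring
    have hmain : sc.norm s (∑ j ∈ Finset.range N',
          (((-1:ℝ))^j * (j:ℝ) / (((j+1).factorial : ℕ):ℝ)) • ((u^(j+1)) x))
        ≤ 12 * (t^2*M) := by
      refine le_trans (BS.norm_sum_le sc s _ _) ?_
      have h1 : ∑ j ∈ Finset.range N', sc.norm s
            ((((-1:ℝ))^j * (j:ℝ) / (((j+1).factorial : ℕ):ℝ)) • ((u^(j+1)) x))
          ≤ ∑ j ∈ Finset.range N', (6*(t^2*M)) * ((j:ℝ) * (1/2)^j) :=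
        Finset.sum_le_sum fun j _ => hterm1 j
      refine le_trans h1 ?_
      rw [← Finset.mul_sum]
      have h2 : (6*(t^2*M)) * (∑ j ∈ Finset.range N', (j:ℝ) * (1/2)^j)
          ≤ (6*(t^2*M)) * 2 :=
        mul_le_mul_of_nonneg_left (BS.sum_j_half_le N') (by positivity)
      linarith
    -- boundary term
    have hbnd : sc.norm s ((((-1:ℝ))^N' / ((N'.factorial : ℕ):ℝ)) • ((u^(N'+1)) x))
        ≤ ε := by
      rw [sc.norm_smul]
      have habs2 : |((-1:ℝ))^N' / ((N'.factorial : ℕ):ℝ)|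
          = (((N'.factorial : ℕ):ℝ))⁻¹ := by
        rw [abs_div, habs1, abs_of_nonneg (le_of_lt (hfacpos N')), one_div]
      rw [habs2]
      have e1 : (((N'.factorial : ℕ):ℝ))⁻¹
          = ((N':ℝ)+1) * ((((N'+1).factorial : ℕ):ℝ))⁻¹ := by
        rw [Nat.factorial_succ]
        have := hfacpos N'
        push_cast
        field_simp
      calc (((N'.factorial : ℕ):ℝ))⁻¹ * sc.norm s ((u^(N'+1)) x)
          ≤ (((N'.factorial : ℕ):ℝ))⁻¹ * ((C*((N':ℝ)+1)/σ)^(N'+1) * M) :=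
            mul_le_mul_of_nonneg_left (hup1 N') (by positivity)
        _ = ((N':ℝ)+1) * (((((N'+1).factorial : ℕ):ℝ))⁻¹ * (C*((N':ℝ)+1)/σ)^(N'+1)) * M := by
            rw [e1]; ring
        _ ≤ ((N':ℝ)+1) * (t * (1/2)^N') * M := by
            refine mul_le_mul_of_nonneg_right ?_ hM0
            exact mul_le_mul_of_nonneg_left (hterm N') (by positivity)
        _ ≤ (t*M) * (((N':ℝ)+2) * (1/2)^N') := by
            have hp := hhalf_pos N'
            have h9 : ((N':ℝ)+1) * (1/2)^N' ≤ ((N':ℝ)+2) * (1/2)^N' := by nlinarith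
            have h10 : (0:ℝ) ≤ ((N':ℝ)+1) * (1/2)^N' := by positivity
            nlinarith [mul_nonneg ht0 hM0, mul_le_mul_of_nonneg_left h9 (mul_nonneg ht0 hM0)]
        _ ≤ (t*M) * (2 * (3/4)^N') :=
            mul_le_mul_of_nonneg_left (BS.j_add_two_le N') (mul_nonneg ht0 hM0)
        _ = (2*(t*M)) * (3/4)^N' := by ring
        _ ≤ ε := hN₀ N' hN'
    have h12 : (0:ℝ) ≤ t^2*M := by positivity
    linarith
  · -- estimate (3)
    have h6 : 6 * C / σ = 6 * t := by rw [htdef]; ring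
    rw [h6]
    refine BS.norm_lim_le sc _ yem x (6*t*M) hyem ?_
    intro ε hε
    refine ⟨1, fun N hN => ?_⟩
    obtain ⟨N', rfl⟩ : ∃ N', N = N' + 1 := ⟨N - 1, by omega⟩
    show sc.norm s ((∑ j ∈ Finset.range (N'+1), vm j) - x) ≤ 6*t*M + ε
    have hvm0 : vm 0 = x := by
      show (((Nat.factorial 0 : ℕ):ℝ))⁻¹ • ((-u)^0) x = x
      simp
    have heq : (∑ j ∈ Finset.range (N'+1), vm j) - x
        = ∑ j ∈ Finset.range N', vm (j+1) := by
      rw [Finset.sum_range_succ' vm N', hvm0]; abel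
    rw [heq]
    calc sc.norm s (∑ j ∈ Finset.range N', vm (j+1))
        ≤ ∑ j ∈ Finset.range N', sc.norm s (vm (j+1)) := BS.norm_sum_le sc s _ _
      _ ≤ ∑ j ∈ Finset.range N', (t*M) * (1/2)^j :=
          Finset.sum_le_sum fun j _ => hvmb j
      _ ≤ (t*M) * 2 := by
          rw [← Finset.mul_sum]
          exact mul_le_mul_of_nonneg_left (BS.sum_half_le N') (by positivity)
      _ ≤ 6*t*M + ε := by linarith [mul_nonneg ht0 hM0]
  · -- estimate (5)
    have h5 : sc.norm s (yep - 0) ≤ 2*M := by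
      refine BS.norm_lim_le sc _ yep 0 (2*M) hyep ?_
      intro ε hε
      refine ⟨0, fun N _ => ?_⟩
      show sc.norm s ((∑ j ∈ Finset.range N, vp j) - 0) ≤ 2*M + ε
      rw [sub_zero]
      have hb1 : sc.norm s (∑ j ∈ Finset.range N, vp j) ≤ 2*M := by
        refine le_trans (BS.norm_sum_le sc s _ _) ?_
        have h1 : ∑ j ∈ Finset.range N, sc.norm s (vp j)
            ≤ ∑ j ∈ Finset.range N, M * (1/2)^j :=
          Finset.sum_le_sum fun j _ => hvp_geom j
        refine le_trans h1 ?_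
        rw [← Finset.mul_sum]
        have h3 : M * (∑ j ∈ Finset.range N, (1/2:ℝ)^j) ≤ M * 2 :=
          mul_le_mul_of_nonneg_left (BS.sum_half_le N) hM0
        linarith
      linarith
    simpa using h5
  · -- estimates (2) and (4)
    intro hux
    set M' : ℝ := sc.norm τ (u x) with hM'def
    have hM'0 : 0 ≤ M' := sc.norm_nonneg τ (u x)
    have hpowy := hpow (u x) hux
    have hupy : ∀ j : ℕ, sc.norm s ((u^(j+1)) x) ≤ (C*(j:ℝ)/σ)^j * M' := by
      intro j
      rw [h22 j]
      exact (hpowy j).2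
    have hupy1 : ∀ k : ℕ, sc.norm s ((u^(k+2)) x) ≤ (C*((k:ℝ)+1)/σ)^(k+1) * M' := by
      intro k
      have := hupy (k+1)
      rwa [hcast k] at this
    -- comparison of factorials
    have hfr : ∀ k : ℕ, ((k:ℝ)+1)/(((k+2).factorial : ℕ):ℝ)
        ≤ ((((k+1).factorial : ℕ):ℝ))⁻¹ := by
      intro k
      have hfs2 : (((k+2).factorial : ℕ):ℝ)
          = ((k:ℝ)+2)*(((k+1).factorial : ℕ):ℝ) := by
        rw [show k+2 = (k+1)+1 from rfl, Nat.factorial_succ]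
        push_cast; ring
      have hF := hfacpos (k+1)
      rw [hfs2, div_le_iff₀ (by positivity)]
      rw [show (((k+1).factorial : ℕ):ℝ)⁻¹ * (((k:ℝ)+2)*(((k+1).factorial : ℕ):ℝ))
          = ((k:ℝ)+2) * ((((k+1).factorial : ℕ):ℝ)⁻¹ * (((k+1).factorial : ℕ):ℝ)) by ring,
        inv_mul_cancel₀ (ne_of_gt hF)]
      linarith
    constructor
    · -- estimate (2)
      have he2 : 2 * C / σ = 2 * t := by rw [htdef]; ring
      rw [he2]
      refine BS.norm_lim_le sc _ yemu x (2*t*M') hyemu ?_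
      intro ε hε
      obtain ⟨N₀, hN₀⟩ := BS.pow_eventually_le (1/2) (2*(t*M')) ε (by norm_num)
        (by norm_num) (by positivity) hε
      refine ⟨max N₀ 1 + 1, fun N hN => ?_⟩
      obtain ⟨N', rfl⟩ : ∃ N', N = N' + 1 := ⟨N - 1, by omega⟩
      have hN'0 : N₀ ≤ N' := by omega
      have hN'1 : 1 ≤ N' := by omega
      show sc.norm s ((∑ j ∈ Finset.range (N'+1), vq j) - x) ≤ 2*t*M' + ε
      have hPeq : (∑ j ∈ Finset.range (N'+1), vq j)
          = expPartial (-u) (x + u x) (N'+1) := rfl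
      rw [hPeq, BS.exp_partial_identity u x N']
      have hsimp : x + (∑ j ∈ Finset.range N',
            (((-1:ℝ))^j * (j:ℝ) / (((j+1).factorial : ℕ):ℝ)) • ((u^(j+1)) x))
            + (((-1:ℝ))^N' / ((N'.factorial : ℕ):ℝ)) • ((u^(N'+1)) x) - x
          = (∑ j ∈ Finset.range N',
            (((-1:ℝ))^j * (j:ℝ) / (((j+1).factorial : ℕ):ℝ)) • ((u^(j+1)) x))
            + (((-1:ℝ))^N' / ((N'.factorial : ℕ):ℝ)) • ((u^(N'+1)) x) := by abel
      rw [hsimp]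
      refine le_trans (sc.norm_add s _ _) ?_
      -- per-term bound, with a shift
      have hterm2 : ∀ k : ℕ, sc.norm s
            ((((-1:ℝ))^(k+1) * ((k+1:ℕ):ℝ) / (((k+2).factorial : ℕ):ℝ)) • ((u^(k+2)) x))
          ≤ (t*M') * (1/2)^k := by
        intro k
        rw [sc.norm_smul]
        have habs : |((-1:ℝ))^(k+1) * ((k+1:ℕ):ℝ) / (((k+2).factorial : ℕ):ℝ)|
            = ((k:ℝ)+1) / (((k+2).factorial : ℕ):ℝ) := by
          rw [abs_div, abs_mul, habs1, one_mul, abs_of_nonneg (Nat.cast_nonneg (k+1)),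
            abs_of_nonneg (le_of_lt (hfacpos (k+2))), hcast k]
        rw [habs]
        calc ((k:ℝ)+1) / (((k+2).factorial : ℕ):ℝ) * sc.norm s ((u^(k+2)) x)
            ≤ ((k:ℝ)+1) / (((k+2).factorial : ℕ):ℝ) * ((C*((k:ℝ)+1)/σ)^(k+1) * M') :=
              mul_le_mul_of_nonneg_left (hupy1 k) (by positivity)
          _ = (((k:ℝ)+1) / (((k+2).factorial : ℕ):ℝ) * (C*((k:ℝ)+1)/σ)^(k+1)) * M' := by
              ring
          _ ≤ (((((k+1).factorial : ℕ):ℝ))⁻¹ * (C*((k:ℝ)+1)/σ)^(k+1)) * M' := by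
              refine mul_le_mul_of_nonneg_right ?_ hM'0
              exact mul_le_mul_of_nonneg_right (hfr k) (by positivity)
          _ ≤ (t * (1/2)^k) * M' :=
              mul_le_mul_of_nonneg_right (hterm k) hM'0
          _ = (t*M') * (1/2)^k := by ring
      have hmain : sc.norm s (∑ j ∈ Finset.range N',
            (((-1:ℝ))^j * (j:ℝ) / (((j+1).factorial : ℕ):ℝ)) • ((u^(j+1)) x))
          ≤ 2*(t*M') := by
        refine le_trans (BS.norm_sum_le sc s _ _) ?_
        obtain ⟨K, rfl⟩ : ∃ K, N' = K + 1 := ⟨N' - 1, by omega⟩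
        rw [Finset.sum_range_succ' (fun j => sc.norm s
          ((((-1:ℝ))^j * (j:ℝ) / (((j+1).factorial : ℕ):ℝ)) • ((u^(j+1)) x))) K]
        have hz : sc.norm s ((((-1:ℝ))^0 * ((0:ℕ):ℝ) / (((0+1).factorial : ℕ):ℝ))
            • ((u^(0+1)) x)) = 0 := by
          norm_num
          exact sc.norm_zero s
        have h2 : ∑ k ∈ Finset.range K, (t*M') * (1/2)^k ≤ (t*M') * 2 := by
          rw [← Finset.mul_sum]
          exact mul_le_mul_of_nonneg_left (BS.sum_half_le K) (by positivity)
        have h3 : (0:ℝ) ≤ t*M' := by positivity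
        simp only [hz, add_zero]
        refine le_trans (Finset.sum_le_sum (fun k _ => hterm2 k)) ?_
        linarith
      -- boundary term
      have hbnd : sc.norm s ((((-1:ℝ))^N' / ((N'.factorial : ℕ):ℝ)) • ((u^(N'+1)) x))
          ≤ ε := by
        rw [sc.norm_smul]
        have habs2 : |((-1:ℝ))^N' / ((N'.factorial : ℕ):ℝ)|
            = (((N'.factorial : ℕ):ℝ))⁻¹ := by
          rw [abs_div, habs1, abs_of_nonneg (le_of_lt (hfacpos N')), one_div]
        rw [habs2]
        obtain ⟨m, rfl⟩ : ∃ m, N' = m + 1 := ⟨N' - 1, by omega⟩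
        calc (((((m+1)).factorial : ℕ):ℝ))⁻¹ * sc.norm s ((u^(m+1+1)) x)
            ≤ (((((m+1)).factorial : ℕ):ℝ))⁻¹ * ((C*((m:ℝ)+1)/σ)^(m+1) * M') :=
              mul_le_mul_of_nonneg_left (hupy1 m) (by positivity)
          _ = ((((((m+1)).factorial : ℕ):ℝ))⁻¹ * (C*((m:ℝ)+1)/σ)^(m+1)) * M' := by ring
          _ ≤ (t * (1/2)^m) * M' := mul_le_mul_of_nonneg_right (hterm m) hM'0
          _ = (2*(t*M')) * (1/2)^(m+1) := by rw [pow_succ]; ring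
          _ ≤ ε := hN₀ (m+1) hN'0
      have h13 : (0:ℝ) ≤ t*M' := by positivity
      linarith
    · -- estimate (4)
      refine BS.norm_lim_le sc _ yem x (2*M') hyem ?_
      intro ε hε
      refine ⟨1, fun N hN => ?_⟩
      obtain ⟨N', rfl⟩ : ∃ N', N = N' + 1 := ⟨N - 1, by omega⟩
      show sc.norm s ((∑ j ∈ Finset.range (N'+1), vm j) - x) ≤ 2*M' + ε
      have hvm0 : vm 0 = x := by
        show (((Nat.factorial 0 : ℕ):ℝ))⁻¹ • ((-u)^0) x = x
        simp
      have heq : (∑ j ∈ Finset.range (N'+1), vm j) - x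
          = ∑ j ∈ Finset.range N', vm (j+1) := by
        rw [Finset.sum_range_succ' vm N', hvm0]; abel
      rw [heq]
      refine le_trans (BS.norm_sum_le sc s _ _) ?_
      have hb4 : ∑ j ∈ Finset.range N', sc.norm s (vm (j+1)) ≤ 2*M' := by
        cases N' with
        | zero => simpa using by positivity
        | succ K =>
          rw [Finset.sum_range_succ' (fun j => sc.norm s (vm (j+1))) K]
          have hg0 : sc.norm s (vm (0+1)) ≤ M' := by
            rw [hvm_norm]
            have h1 : sc.norm s ((u^1) x) ≤ (C*((0:ℕ):ℝ)/σ)^0 * M' := hupy 0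
            simp only [Nat.cast_zero] at h1
            norm_num at h1 ⊢
            exact h1
          have hgk : ∀ k : ℕ, sc.norm s (vm (k+1+1)) ≤ (t*M') * (1/2)^k := by
            intro k
            rw [hvm_norm]
            have e2 : ((((k+2).factorial : ℕ):ℝ))⁻¹ ≤ ((((k+1).factorial : ℕ):ℝ))⁻¹ := by
              have h1 := hfacpos (k+1)
              have h2 := hfacpos (k+2)
              have h3 : ((k+1).factorial : ℕ) ≤ ((k+2).factorial : ℕ) :=
                Nat.factorial_le (by omega)
              have h4 : (((k+1).factorial : ℕ):ℝ) ≤ (((k+2).factorial : ℕ):ℝ) := by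
                exact_mod_cast h3
              exact inv_anti₀ h1 h4
            calc ((((k+1+1).factorial : ℕ):ℝ))⁻¹ * sc.norm s ((u^(k+1+1)) x)
                ≤ ((((k+1+1).factorial : ℕ):ℝ))⁻¹ * ((C*((k:ℝ)+1)/σ)^(k+1) * M') :=
                  mul_le_mul_of_nonneg_left (hupy1 k) (by positivity)
              _ ≤ ((((k+1).factorial : ℕ):ℝ))⁻¹ * ((C*((k:ℝ)+1)/σ)^(k+1) * M') := by
                  refine mul_le_mul_of_nonneg_right e2 ?_
                  positivity
              _ = (((((k+1).factorial : ℕ):ℝ))⁻¹ * (C*((k:ℝ)+1)/σ)^(k+1)) * M' := by ring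
              _ ≤ (t * (1/2)^k) * M' := mul_le_mul_of_nonneg_right (hterm k) hM'0
              _ = (t*M') * (1/2)^k := by ring
          have h1 : ∑ k ∈ Finset.range K, sc.norm s (vm (k+1+1))
              ≤ ∑ k ∈ Finset.range K, (t*M') * (1/2)^k :=
            Finset.sum_le_sum fun k _ => hgk k
          have h2 : ∑ k ∈ Finset.range K, (t*M') * (1/2)^k ≤ (t*M') * 2 := by
            rw [← Finset.mul_sum]
            exact mul_le_mul_of_nonneg_left (BS.sum_half_le K) (by positivity)
          have h3 : 2*(t*M') ≤ M' := by nlinarith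
          linarith
      linarith
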